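/- The loop integrals at the Gaussian fixed point evaluate in closed form: 2f₁(0) = √(2π), 2f₂(0) = 2(√2 − 1)√π, 2f₃(0) = 4√2(2√2 − 1 − √3)√π, and f_w(0) = (9/2)√(2π). Consequently, the one-loop coefficients of the truncated flow are L₁(0,0) = √(2π), 4L₂(0,0) − 2f_w(0) = −(8 + √2)√π, 12L₂(0,0) − 3f_w(0) = −(3/2)(16 − 7√2)√π, 8L₂(0,0) − 3f_w(0) = −(16 − (5/2)√2)√π, and 6L₃(0,0) = 24(√(11 − 4√6) − 1)√(2π). -/

import Mathlib

/-!  The truncated functional renormalization group flow of the rank-4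
`SU(2)` group field theory in the `φ⁶` necklace truncation
(Carrozza–Lahoche–Oriti). -/

open Real MeasureTheory

/-- The loop integral `f_k(u₂)`. -/
noncomputable def fInt (k : ℕ) (u : ℝ) : ℝ :=
  2 * Real.sqrt 2 * ∫ x in Set.Ioi (0 : ℝ),
    x ^ 6 * Real.exp (-x ^ 2) * (1 - Real.exp (-x ^ 2)) ^ (k - 1) /
      (x ^ 2 + u * (1 - Real.exp (-x ^ 2))) ^ (k + 1)

/-- The loop integral `g_k(u₂)`. -/
noncomputable def gInt (k : ℕ) (u : ℝ) : ℝ :=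
  2 * Real.sqrt 2 * ∫ x in Set.Ioi (0 : ℝ),
    x ^ 4 * Real.exp (-x ^ 2) * (1 - Real.exp (-x ^ 2)) ^ k /
      (x ^ 2 + u * (1 - Real.exp (-x ^ 2))) ^ (k + 1)

/-- The wave-function integral `f_w(u₂)`. -/
noncomputable def fw (u : ℝ) : ℝ :=
  9 * Real.sqrt 2 * ∫ x in Set.Ioi (0 : ℝ),
    Real.exp (-x ^ 2) * (x ^ 2 / (x ^ 2 + u * (1 - Real.exp (-x ^ 2)))) ^ 2

/-- The wave-function integral `g_w(u₂)`. -/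
noncomputable def gw (u : ℝ) : ℝ :=
  9 * Real.sqrt 2 * ∫ x in Set.Ioi (0 : ℝ),
    Real.exp (-x ^ 2) * (1 - Real.exp (-x ^ 2)) *
      (x / (x ^ 2 + u * (1 - Real.exp (-x ^ 2)))) ^ 2

/-- The anomalous dimension `η(u₂, u₄)`. -/
noncomputable def eta (u2 u4 : ℝ) : ℝ := fw u2 * u4 / (1 - gw u2 * u4 / 2)

/-- The loop coefficient `L_k(u₂, u₄) = 2 f_k(u₂) + η g_k(u₂)`. -/
noncomputable def Lk (k : ℕ) (u2 u4 : ℝ) : ℝ :=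
  2 * fInt k u2 + eta u2 u4 * gInt k u2

/-- The beta function `β₂`. -/
noncomputable def beta2 (u2 u4 : ℝ) : ℝ :=
  -(2 + eta u2 u4) * u2 - 6 * Lk 1 u2 u4 * u4

/-- The beta function `β₄`. -/
noncomputable def beta4 (u2 u4 u61 u62 : ℝ) : ℝ :=
  -(1 + 2 * eta u2 u4) * u4 - 4 * Lk 1 u2 u4 * (u61 + 4 * u62) +
    4 * Lk 2 u2 u4 * u4 ^ 2

/-- The beta function `β_{6,1}`. -/
noncomputable def beta61 (u2 u4 u61 : ℝ) : ℝ :=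
  -3 * eta u2 u4 * u61 + 12 * Lk 2 u2 u4 * u4 * u61 - 6 * Lk 3 u2 u4 * u4 ^ 3

/-- The beta function `β_{6,2}`. -/
noncomputable def beta62 (u2 u4 u62 : ℝ) : ℝ :=
  -3 * eta u2 u4 * u62 + 8 * Lk 2 u2 u4 * u4 * u62

/-- The truncated flow `(u₂, u₄, u_{6,1}, u_{6,2}) ↦ (β₂, β₄, β_{6,1}, β_{6,2})`. -/
noncomputable def betaMap : (Fin 4 → ℝ) → (Fin 4 → ℝ) := fun u =>
  ![beta2 (u 0) (u 1), beta4 (u 0) (u 1) (u 2) (u 3),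
    beta61 (u 0) (u 1) (u 2), beta62 (u 0) (u 1) (u 3)]


section LoopAux
open Set Filter Topology

lemma intOn_gauss {b : ℝ} (hb : 0 < b) :
    IntegrableOn (fun x : ℝ => Real.exp (-(b * x ^ 2))) (Set.Ioi 0) := by
  simpa [neg_mul] using (integrable_exp_neg_mul_sq hb).integrableOn (s := Set.Ioi 0)

lemma int_gauss {b : ℝ} (hb : 0 < b) :
    ∫ x in Set.Ioi (0:ℝ), Real.exp (-(b * x ^ 2)) = Real.sqrt (π / b) / 2 := by
  simpa [neg_mul] using integral_gaussian_Ioi b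

lemma hasDerivAt_gauss (c x : ℝ) :
    HasDerivAt (fun x : ℝ => Real.exp (-(c * x ^ 2)))
      (Real.exp (-(c * x ^ 2)) * (-(2 * c * x))) x := by
  have h1 : HasDerivAt (fun x : ℝ => -(c * x ^ 2)) (-(2 * c * x)) x := by
    have := ((hasDerivAt_pow 2 x).const_mul c).neg
    refine this.congr_deriv ?_
    simp; ring
  exact (Real.hasDerivAt_exp _).comp x h1

lemma tendsto_gauss (c : ℝ) (hc : 0 < c) :
    Tendsto (fun x : ℝ => Real.exp (-(c * x ^ 2))) atTop (𝓝 0) := by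
  apply Real.tendsto_exp_atBot.comp
  have : Tendsto (fun x : ℝ => c * x ^ 2) atTop atTop :=
    (tendsto_pow_atTop (by norm_num)).const_mul_atTop hc
  exact tendsto_neg_atBot_iff.mpr this

lemma tendsto_mul_exp_sq : Tendsto (fun x : ℝ => x * Real.exp (-(x ^ 2))) atTop (𝓝 0) := by
  have h := Real.tendsto_pow_mul_exp_neg_atTop_nhds_zero 1
  simp only [pow_one] at h
  refine tendsto_of_tendsto_of_tendsto_of_le_of_le' tendsto_const_nhds h ?_ ?_
  · filter_upwards [eventually_ge_atTop (0:ℝ)] with x hx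
    positivity
  · filter_upwards [eventually_ge_atTop (1:ℝ)] with x hx
    have h2 : -(x ^ 2) ≤ -x := by nlinarith
    exact mul_le_mul_of_nonneg_left (Real.exp_le_exp.2 h2) (by linarith)

lemma integrableOn_sq_gauss :
    IntegrableOn (fun x : ℝ => x ^ 2 * Real.exp (-(x ^ 2))) (Set.Ioi 0) := by
  have h := integrableOn_rpow_mul_exp_neg_mul_sq (b := 1) one_pos (s := 2) (by norm_num)
  refine h.congr_fun ?_ measurableSet_Ioi
  intro x hx
  have h2 : x ^ (2:ℝ) = x ^ (2:ℕ) := by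
    rw [← Real.rpow_natCast x 2]; norm_num
  simp [h2]

lemma moment2 : ∫ x in Set.Ioi (0:ℝ), x ^ 2 * Real.exp (-(x ^ 2)) = Real.sqrt π / 4 := by
  have hg : ∀ x ∈ Set.Ioi (0:ℝ), HasDerivAt (fun x : ℝ => -(x * Real.exp (-(x ^ 2))) / 2)
      (x ^ 2 * Real.exp (-(x ^ 2)) - Real.exp (-(x ^ 2)) / 2) x := by
    intro x _
    have h2 := hasDerivAt_gauss 1 x
    simp only [one_mul] at h2
    have h3 := ((hasDerivAt_id x).mul h2).neg.div_const 2
    refine h3.congr_deriv ?_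
    simp [id]; ring
  have hint : IntegrableOn
      (fun x : ℝ => x ^ 2 * Real.exp (-(x ^ 2)) - Real.exp (-(x ^ 2)) / 2) (Set.Ioi 0) := by
    have := (intOn_gauss one_pos).div_const 2
    have h := integrableOn_sq_gauss.sub this
    simp only [one_mul] at h
    exact h
  have htend : Tendsto (fun x : ℝ => -(x * Real.exp (-(x ^ 2))) / 2) atTop (𝓝 0) := by
    simpa using tendsto_mul_exp_sq.neg.div_const 2
  have hcont : ContinuousWithinAt (fun x : ℝ => -(x * Real.exp (-(x ^ 2))) / 2)
      (Set.Ici 0) 0 := by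
    apply Continuous.continuousWithinAt
    continuity
  have key := integral_Ioi_of_hasDerivAt_of_tendsto hcont hg hint htend
  simp only [neg_zero, zero_mul, mul_zero, zero_div, sub_zero, zero_sub, neg_neg] at key
  have hBint : IntegrableOn (fun x : ℝ => Real.exp (-(x ^ 2)) / 2) (Set.Ioi 0) := by
    have := (intOn_gauss one_pos).div_const 2
    simp only [one_mul] at this
    exact this
  rw [integral_sub integrableOn_sq_gauss hBint] at key
  have hB : ∫ x in Set.Ioi (0:ℝ), Real.exp (-(x ^ 2)) / 2 = Real.sqrt π / 4 := by
    rw [integral_div]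
    have h1 := int_gauss (b := 1) one_pos
    simp only [one_mul] at h1
    rw [h1, div_one]
    ring
  rw [hB] at key
  linarith

noncomputable def F3 (x : ℝ) : ℝ :=
  Real.exp (-(x ^ 2)) - 2 * Real.exp (-(2 * x ^ 2)) + Real.exp (-(3 * x ^ 2))

lemma exp_sq_pow (n : ℕ) (x : ℝ) :
    Real.exp (-((n : ℝ) * x ^ 2)) = Real.exp (-(x ^ 2)) ^ n := by
  rw [← Real.exp_nat_mul]; ring_nf

lemma F3_eq (x : ℝ) : F3 x = Real.exp (-(x ^ 2)) * (1 - Real.exp (-(x ^ 2))) ^ 2 := by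
  have h2 := exp_sq_pow 2 x
  have h3 := exp_sq_pow 3 x
  push_cast at h2 h3
  rw [F3, h2, h3]; ring

lemma one_sub_exp_le_sq (x : ℝ) : 1 - Real.exp (-(x ^ 2)) ≤ x ^ 2 := by
  have := Real.add_one_le_exp (-(x ^ 2))
  linarith

lemma one_sub_exp_nonneg (x : ℝ) : 0 ≤ 1 - Real.exp (-(x ^ 2)) := by
  have : Real.exp (-(x ^ 2)) ≤ 1 := Real.exp_le_one_iff.mpr (neg_nonpos.mpr (sq_nonneg x))
  linarith

lemma F3_nonneg (x : ℝ) : 0 ≤ F3 x := by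
  rw [F3_eq]; positivity

lemma F3_le (x : ℝ) : F3 x ≤ x ^ 4 := by
  rw [F3_eq]
  have h1 := one_sub_exp_le_sq x
  have h2 := one_sub_exp_nonneg x
  have h3 : Real.exp (-(x ^ 2)) ≤ 1 := Real.exp_le_one_iff.mpr (neg_nonpos.mpr (sq_nonneg x))
  have h4 : (0:ℝ) < Real.exp (-(x ^ 2)) := Real.exp_pos _
  nlinarith [sq_nonneg x]

lemma continuous_F3 : Continuous F3 := by
  unfold F3; continuity

lemma intOn_F3 : IntegrableOn (fun x : ℝ => F3 x / x ^ 2) (Set.Ioi 0) := by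
  refine Integrable.mono' (g := fun x : ℝ => Real.exp (-(1 * x ^ 2))) (intOn_gauss one_pos) ?_ ?_
  · exact (continuous_F3.continuousOn.div (continuousOn_pow 2)
      (fun x hx => by have : (0:ℝ) < x := hx; positivity)).aestronglyMeasurable measurableSet_Ioi
  · filter_upwards [ae_restrict_mem measurableSet_Ioi] with x hx
    have hx0 : (0:ℝ) < x := hx
    rw [Real.norm_eq_abs, abs_of_nonneg (div_nonneg (F3_nonneg x) (by positivity))]
    rw [one_mul, F3_eq]
    have h1 := one_sub_exp_le_sq x
    have h2 := one_sub_exp_nonneg x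
    have h4 : (0:ℝ) < Real.exp (-(x ^ 2)) := Real.exp_pos _
    rw [div_le_iff₀ (by positivity)]
    have h5 : 1 - Real.exp (-(x ^ 2)) ≤ 1 := by linarith
    nlinarith [mul_le_mul h1 h5 h2 (sq_nonneg x)]

lemma hasDerivAt_F3 (x : ℝ) :
    HasDerivAt F3 (Real.exp (-(x ^ 2)) * (-(2 * x))
      - 2 * (Real.exp (-(2 * x ^ 2)) * (-(4 * x)))
      + Real.exp (-(3 * x ^ 2)) * (-(6 * x))) x := by
  have h1 := hasDerivAt_gauss 1 x
  have h2 := hasDerivAt_gauss 2 x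
  have h3 := hasDerivAt_gauss 3 x
  simp only [one_mul] at h1
  have := (h1.sub ((h2.const_mul 2))).add h3
  refine this.congr_deriv ?_
  ring

lemma hasDerivAt_negF3_div (x : ℝ) (hx : x ≠ 0) :
    HasDerivAt (fun x : ℝ => -F3 x / x)
      ((2 * Real.exp (-(x ^ 2)) - 8 * Real.exp (-(2 * x ^ 2)) + 6 * Real.exp (-(3 * x ^ 2)))
        + F3 x / x ^ 2) x := by
  have h := ((hasDerivAt_F3 x).neg).div (hasDerivAt_id x) hx
  refine h.congr_deriv ?_
  simp only [id, Pi.neg_apply]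
  field_simp
  ring

lemma tendsto_F3_atTop : Tendsto (fun x : ℝ => -F3 x / x) atTop (𝓝 0) := by
  have hF : Tendsto (fun x : ℝ => -F3 x) atTop (𝓝 0) := by
    have h1 := tendsto_gauss 1 one_pos
    simp only [one_mul] at h1
    have h2 := (tendsto_gauss 2 two_pos).const_mul (2:ℝ)
    have h3 := tendsto_gauss 3 (by norm_num)
    have := ((h1.sub h2).add h3).neg
    simpa [F3] using this
  have := hF.mul tendsto_inv_atTop_zero
  simpa [div_eq_mul_inv] using this

lemma contWithin_F3 : ContinuousWithinAt (fun x : ℝ => -F3 x / x) (Set.Ici 0) 0 := by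
  have h0 : ((fun x : ℝ => -F3 x / x) 0) = 0 := by simp
  unfold ContinuousWithinAt
  rw [h0]
  apply tendsto_of_tendsto_of_tendsto_of_le_of_le'
  · exact ((continuous_pow 3).neg.tendsto' 0 0 (by norm_num)).mono_left nhdsWithin_le_nhds
  · exact tendsto_const_nhds
  · filter_upwards [eventually_mem_nhdsWithin] with x (hx : x ∈ Set.Ici 0)
    rcases eq_or_lt_of_le hx.out with h | h
    · simp [← h]
    · rw [Pi.neg_apply, neg_div, neg_le_neg_iff, div_le_iff₀ h]
      have := F3_le x
      nlinarith
  · filter_upwards [eventually_mem_nhdsWithin] with x (hx : x ∈ Set.Ici 0)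
    rcases eq_or_lt_of_le hx.out with h | h
    · simp [← h]
    · rw [neg_div, neg_nonpos]
      exact div_nonneg (F3_nonneg x) h.le

lemma intOn_A : IntegrableOn (fun x : ℝ =>
    2 * Real.exp (-(x ^ 2)) - 8 * Real.exp (-(2 * x ^ 2)) + 6 * Real.exp (-(3 * x ^ 2)))
    (Set.Ioi 0) := by
  have h1 := (intOn_gauss one_pos).const_mul (2:ℝ)
  have h2 := (intOn_gauss two_pos).const_mul (8:ℝ)
  have h3 := (intOn_gauss (by norm_num : (0:ℝ) < 3)).const_mul (6:ℝ)
  have h := (h1.sub h2).add h3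
  simp only [one_mul] at h
  exact h

lemma int_A : ∫ x in Set.Ioi (0:ℝ),
    (2 * Real.exp (-(x ^ 2)) - 8 * Real.exp (-(2 * x ^ 2)) + 6 * Real.exp (-(3 * x ^ 2)))
    = Real.sqrt π - 4 * Real.sqrt (π / 2) + 3 * Real.sqrt (π / 3) := by
  have h1 := (intOn_gauss one_pos).const_mul (2:ℝ)
  have h2 := (intOn_gauss two_pos).const_mul (8:ℝ)
  have h3 := (intOn_gauss (by norm_num : (0:ℝ) < 3)).const_mul (6:ℝ)
  simp only [one_mul] at h1
  have h12 : IntegrableOn (fun x : ℝ =>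
      2 * Real.exp (-(x ^ 2)) - 8 * Real.exp (-(2 * x ^ 2))) (Set.Ioi 0) := h1.sub h2
  rw [integral_add h12 h3,
    integral_sub h1 h2, integral_const_mul, integral_const_mul, integral_const_mul]
  have g1 := int_gauss (b := 1) one_pos
  simp only [one_mul] at g1
  rw [g1, int_gauss two_pos, int_gauss (by norm_num : (0:ℝ) < 3), div_one]
  ring

lemma sqrt_pi_div_two : Real.sqrt (π / 2) = Real.sqrt π * Real.sqrt 2 / 2 := by
  rw [Real.sqrt_div pi_pos.le, div_eq_div_iff (by positivity) two_ne_zero]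
  have := Real.mul_self_sqrt (by norm_num : (0:ℝ) ≤ 2)
  nlinarith [Real.sqrt_nonneg π]

lemma sqrt_pi_div_three : Real.sqrt (π / 3) = Real.sqrt π * Real.sqrt 3 / 3 := by
  rw [Real.sqrt_div pi_pos.le, div_eq_div_iff (by positivity) (by norm_num : (3:ℝ) ≠ 0)]
  have := Real.mul_self_sqrt (by norm_num : (0:ℝ) ≤ 3)
  nlinarith [Real.sqrt_nonneg π]

lemma main3 : ∫ x in Set.Ioi (0:ℝ), F3 x / x ^ 2
    = (2 * Real.sqrt 2 - 1 - Real.sqrt 3) * Real.sqrt π := by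
  have key := integral_Ioi_of_hasDerivAt_of_tendsto contWithin_F3
    (fun x hx => hasDerivAt_negF3_div x (ne_of_gt hx)) (intOn_A.add intOn_F3) tendsto_F3_atTop
  have h0 : -F3 0 / 0 = 0 := by simp
  rw [h0, integral_add intOn_A intOn_F3, int_A] at key
  rw [sqrt_pi_div_two, sqrt_pi_div_three] at key
  have s2 := Real.mul_self_sqrt (by norm_num : (0:ℝ) ≤ 2)
  have s3 := Real.mul_self_sqrt (by norm_num : (0:ℝ) ≤ 3)
  nlinarith [key, Real.sqrt_nonneg π, Real.sqrt_nonneg 2, Real.sqrt_nonneg 3]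

lemma fInt1 : fInt 1 0 = Real.sqrt 2 * Real.sqrt π / 2 := by
  unfold fInt
  rw [setIntegral_congr_fun measurableSet_Ioi
    (g := fun x : ℝ => x ^ 2 * Real.exp (-(x ^ 2))) ?_, moment2]
  · ring
  · intro x hx
    have hx0 : (0:ℝ) < x := hx
    simp only []
    rw [zero_mul, add_zero]
    norm_num
    field_simp

lemma fInt2 : fInt 2 0 = (Real.sqrt 2 - 1) * Real.sqrt π := by
  unfold fInt
  rw [setIntegral_congr_fun measurableSet_Ioi
    (g := fun x : ℝ => Real.exp (-(x ^ 2)) - Real.exp (-(2 * x ^ 2))) ?_]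
  · have h1 := intOn_gauss one_pos
    simp only [one_mul] at h1
    rw [integral_sub h1 (intOn_gauss two_pos)]
    have g1 := int_gauss (b := 1) one_pos
    simp only [one_mul] at g1
    rw [g1, int_gauss two_pos, div_one, sqrt_pi_div_two]
    have s2 := Real.mul_self_sqrt (by norm_num : (0:ℝ) ≤ 2)
    nlinarith [Real.sqrt_nonneg π, Real.sqrt_nonneg 2]
  · intro x hx
    have hx0 : (0:ℝ) < x := hx
    have h2 := exp_sq_pow 2 x
    push_cast at h2
    simp only []
    rw [zero_mul, add_zero, h2]
    have he : (x ^ 2) ^ (2 + 1) = x ^ 6 := by ring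
    rw [he]
    field_simp
    ring

lemma fInt3 : fInt 3 0 = 2 * Real.sqrt 2 * ((2 * Real.sqrt 2 - 1 - Real.sqrt 3) * Real.sqrt π) := by
  unfold fInt
  rw [setIntegral_congr_fun measurableSet_Ioi (g := fun x : ℝ => F3 x / x ^ 2) ?_, main3]
  · intro x hx
    have hx0 : (0:ℝ) < x := hx
    simp only []
    rw [zero_mul, add_zero, F3_eq]
    have he : (x ^ 2) ^ (3 + 1) = x ^ 8 := by ring
    rw [he]
    field_simp

lemma fw0 : fw 0 = 9 / 2 * (Real.sqrt 2 * Real.sqrt π) := by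
  unfold fw
  rw [setIntegral_congr_fun measurableSet_Ioi (g := fun x : ℝ => Real.exp (-(x ^ 2))) ?_]
  · have g1 := int_gauss (b := 1) one_pos
    simp only [one_mul] at g1
    rw [g1, div_one]
    ring
  · intro x hx
    have hx0 : (0:ℝ) < x := hx
    simp only []
    rw [zero_mul, add_zero, div_self (by positivity : (x:ℝ) ^ 2 ≠ 0)]
    norm_num

end LoopAux

/-- **Closed forms of the loop integrals at the Gaussian fixed point** and the
resulting one-loop coefficients of the truncated flow. -/
theorem loop_integrals_at_gfp :
    2 * fInt 1 0 = Real.sqrt (2 * π) ∧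
    2 * fInt 2 0 = 2 * (Real.sqrt 2 - 1) * Real.sqrt π ∧
    2 * fInt 3 0 =
      4 * Real.sqrt 2 * (2 * Real.sqrt 2 - 1 - Real.sqrt 3) * Real.sqrt π ∧
    fw 0 = 9 / 2 * Real.sqrt (2 * π) ∧
    Lk 1 0 0 = Real.sqrt (2 * π) ∧
    4 * Lk 2 0 0 - 2 * fw 0 = -((8 + Real.sqrt 2) * Real.sqrt π) ∧
    12 * Lk 2 0 0 - 3 * fw 0 = -(3 / 2 * (16 - 7 * Real.sqrt 2) * Real.sqrt π) ∧
    8 * Lk 2 0 0 - 3 * fw 0 = -((16 - 5 / 2 * Real.sqrt 2) * Real.sqrt π) ∧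
    6 * Lk 3 0 0 =
      24 * (Real.sqrt (11 - 4 * Real.sqrt 6) - 1) * Real.sqrt (2 * π) := by
  have s2 := Real.mul_self_sqrt (by norm_num : (0:ℝ) ≤ 2)
  have s3 := Real.mul_self_sqrt (by norm_num : (0:ℝ) ≤ 3)
  have n2 := Real.sqrt_nonneg 2
  have n3 := Real.sqrt_nonneg 3
  have h2pi : Real.sqrt (2 * π) = Real.sqrt 2 * Real.sqrt π := Real.sqrt_mul (by norm_num) π
  have s6 : Real.sqrt 6 = Real.sqrt 2 * Real.sqrt 3 := by
    rw [show (6:ℝ) = 2 * 3 by norm_num, Real.sqrt_mul (by norm_num)]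
  have h1le : (1:ℝ) ≤ Real.sqrt 2 := by nlinarith
  have h3le : Real.sqrt 3 ≤ 2 := by nlinarith
  have h11 : Real.sqrt (11 - 4 * Real.sqrt 6) = 2 * Real.sqrt 2 - Real.sqrt 3 := by
    rw [show (11 - 4 * Real.sqrt 6 : ℝ) = (2 * Real.sqrt 2 - Real.sqrt 3) ^ 2 by
      rw [s6]; nlinarith, Real.sqrt_sq (by nlinarith)]
  have heta : eta 0 0 = 0 := by simp [eta]
  have hL : ∀ k, Lk k 0 0 = 2 * fInt k 0 := fun k => by simp [Lk, heta]
  refine ⟨?_, ?_, ?_, ?_, ?_, ?_, ?_, ?_, ?_⟩ <;>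
    simp only [hL, fInt1, fInt2, fInt3, fw0, h2pi, h11] <;> ring
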